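/- Multivariate Bregman identity: for a differentiable convex function f : ℝ^{k-1} → ℝ and its associated function f*(u) = (1 + Σ_i u_i) f(u/(1 + Σ_i u_i)), for any u, v ∈ ℝ^{k-1} with 1 + Σ_i u_i > 0 and 1 + Σ_i v_i > 0, the Bregman divergences satisfy B_f(u/(1+Σ_i u_i), v/(1+Σ_i v_i)) = (1/(1+Σ_i u_i)) · B_{f*}(u, v). -/

import Mathlib

/-- Multivariate Bregman identity:
`B_f(u/(1+Σu), v/(1+Σv)) = (1/(1+Σu)) · B_{f*}(u, v)` where
`f*(u) = (1+Σ_i u_i) f(u/(1+Σ_i u_i))`. -/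
theorem stmt_2 (n : ℕ) (f : (Fin n → ℝ) → ℝ)
    (hf : ConvexOn ℝ Set.univ f) (hdiff : Differentiable ℝ f)
    (fstar : (Fin n → ℝ) → ℝ)
    (hfstar : ∀ u, fstar u = (1 + ∑ i, u i) * f ((1 + ∑ i, u i)⁻¹ • u))
    (B : ((Fin n → ℝ) → ℝ) → (Fin n → ℝ) → (Fin n → ℝ) → ℝ)
    (hB : ∀ φ x y, B φ x y = φ x - φ y - fderiv ℝ φ y (x - y))
    (u v : Fin n → ℝ) (hu : 0 < 1 + ∑ i, u i) (hv : 0 < 1 + ∑ i, v i) :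
    B f ((1 + ∑ i, u i)⁻¹ • u) ((1 + ∑ i, v i)⁻¹ • v)
      = (1 + ∑ i, u i)⁻¹ * B fstar u v := by
  have hune : (1 + ∑ i, u i) ≠ 0 := ne_of_gt hu
  have hvne : (1 + ∑ i, v i) ≠ 0 := ne_of_gt hv
  set su := 1 + ∑ i, u i with hsu
  set sv := 1 + ∑ i, v i with hsv
  set ut := su⁻¹ • u with hut
  set vt := sv⁻¹ • v with hvt
  -- sum of (u - v) equals su - sv
  have hsumuv : ∑ i, (u - v) i = su - sv := by
    simp [hsu, hsv, Finset.sum_sub_distrib]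
  -- derivative of the sum function
  have hsumD : ∀ w : Fin n → ℝ,
      HasFDerivAt (fun w : Fin n → ℝ => 1 + ∑ i, w i)
        ((∑ i, ContinuousLinearMap.proj i : (Fin n → ℝ) →L[ℝ] ℝ)) w := by
    intro w
    have h1 : HasFDerivAt (fun w : Fin n → ℝ => ∑ i, w i)
        ((∑ i, ContinuousLinearMap.proj i : (Fin n → ℝ) →L[ℝ] ℝ)) w :=
      HasFDerivAt.fun_sum fun i _ =>
        (ContinuousLinearMap.proj (R := ℝ) (φ := fun _ : Fin n => ℝ) i).hasFDerivAt
    simpa using h1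
  set L : (Fin n → ℝ) →L[ℝ] ℝ := ∑ i, ContinuousLinearMap.proj i with hL
  have hLapp : ∀ w : Fin n → ℝ, L w = ∑ i, w i := by
    intro w; simp [hL]
  -- derivative of w ↦ (1 + ∑ w)⁻¹
  have hinv : HasFDerivAt (fun w : Fin n → ℝ => (1 + ∑ i, w i)⁻¹)
      ((ContinuousLinearMap.smulRight (1 : ℝ →L[ℝ] ℝ) (-(sv ^ 2)⁻¹)).comp L) v := by
    exact (hasFDerivAt_inv (by exact hvne)).comp v (hsumD v)
  -- derivative of g : w ↦ (1+∑w)⁻¹ • w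
  have hg : HasFDerivAt (fun w : Fin n → ℝ => (1 + ∑ i, w i)⁻¹ • w)
      (sv⁻¹ • ContinuousLinearMap.id ℝ (Fin n → ℝ) +
        (((ContinuousLinearMap.smulRight (1 : ℝ →L[ℝ] ℝ) (-(sv ^ 2)⁻¹)).comp L).smulRight v)) v := by
    have := hinv.smul (hasFDerivAt_id v)
    simpa [← hsv] using this
  set F : (Fin n → ℝ) →L[ℝ] ℝ := fderiv ℝ f vt with hF
  have hfg : HasFDerivAt (f ∘ fun w : Fin n → ℝ => (1 + ∑ i, w i)⁻¹ • w)
      (F.comp (sv⁻¹ • ContinuousLinearMap.id ℝ (Fin n → ℝ) +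
        (((ContinuousLinearMap.smulRight (1 : ℝ →L[ℝ] ℝ) (-(sv ^ 2)⁻¹)).comp L).smulRight v))) v := by
    have hfd : HasFDerivAt f F ((1 + ∑ i, v i)⁻¹ • v) := by
      rw [← hsv, ← hvt]; exact (hdiff vt).hasFDerivAt
    exact HasFDerivAt.comp (g := f) (f := fun w : Fin n → ℝ => (1 + ∑ i, w i)⁻¹ • w) v hfd hg
  -- derivative of fstar
  have hfsD : HasFDerivAt fstar
      (sv • (F.comp (sv⁻¹ • ContinuousLinearMap.id ℝ (Fin n → ℝ) +
        (((ContinuousLinearMap.smulRight (1 : ℝ →L[ℝ] ℝ) (-(sv ^ 2)⁻¹)).comp L).smulRight v)))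
        + f vt • L) v := by
    have hfun : fstar = fun w : Fin n → ℝ => (1 + ∑ i, w i) * f ((1 + ∑ i, w i)⁻¹ • w) :=
      funext hfstar
    rw [hfun]
    have := (hsumD v).mul hfg
    simpa [← hsv, ← hvt, Function.comp_def, Pi.mul_def] using this
  -- key: evaluate fderiv of fstar at u - v
  have hvec : sv⁻¹ • (u - v) + (-(sv ^ 2)⁻¹ * (su - sv)) • v = (sv⁻¹ * su) • (ut - vt) := by
    funext i
    simp only [Pi.add_apply, Pi.smul_apply, Pi.sub_apply, smul_eq_mul, hut, hvt]
    field_simp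
    ring
  have hkey : fderiv ℝ fstar v (u - v)
      = su * F (ut - vt) + f vt * (su - sv) := by
    rw [hfsD.fderiv]
    simp only [ContinuousLinearMap.add_apply, ContinuousLinearMap.coe_smul',
      Pi.smul_apply, ContinuousLinearMap.coe_comp', Function.comp_apply,
      ContinuousLinearMap.smulRight_apply, ContinuousLinearMap.coe_id', id_eq,
      ContinuousLinearMap.one_apply, smul_eq_mul, hL, ContinuousLinearMap.sum_apply,
      ContinuousLinearMap.proj_apply]
    rw [hsumuv]
    rw [show ((su - sv) * -(sv ^ 2)⁻¹) = -(sv ^ 2)⁻¹ * (su - sv) by ring]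
    rw [hvec, F.map_smul]
    simp only [smul_eq_mul]
    field_simp
  rw [hB, hB, hfstar u, hfstar v, hkey]
  rw [← hsu, ← hsv, ← hut, ← hvt]
  field_simp
  ring
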